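/- Let (E, ‖·‖) be a real normed vector space, n ≥ 1, L ≥ 0, and let P_0, P_1, P_2, … be doubly stochastic real n×n matrices. For each i ∈ {1,…,n} and each time t ≥ 0 let g_i(t) ∈ E satisfy ‖g_i(t)‖ ≤ L, and define z_i(0) = 0 and z_i(t+1) = Σ_{j=1}^n [P_t]_{ji} z_j(t) + g_i(t). Let z̄(t) = (1/n) Σ_{j=1}^n z_j(t). Assume the sequence ‖P_t − J‖ is nonincreasing in t, and let T and δ be positive integers such that ∏_{k=0}^{δ−1} ‖P_k − J‖ ≤ 1/(T√n). Then for every t with 1 ≤ t ≤ T and every i ∈ {1,…,n}, ‖z̄(t) − z_i(t)‖ ≤ 3L + 2Lδ. -/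

import Mathlib

open Matrix

/-- Eigenvalues of a Hermitian matrix sorted in ascending order:
`eigAsc hM 0` is the smallest eigenvalue and `eigAsc hM (n-1)` the largest. -/
noncomputable def eigAsc {n : ℕ} {M : Matrix (Fin n) (Fin n) ℝ} (hM : M.IsHermitian) : Fin n → ℝ :=
  hM.eigenvalues ∘ Tuple.sort hM.eigenvalues

/-- The ℓ² operator (spectral) norm of a real square matrix. -/
noncomputable def specNorm {n : ℕ} (M : Matrix (Fin n) (Fin n) ℝ) : ℝ :=
  ‖Matrix.toEuclideanCLM (𝕜 := ℝ) M‖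

/-- A real square matrix is doubly stochastic if its entries are nonnegative and
all row sums and column sums equal one. -/
def DoublyStochastic {n : ℕ} (M : Matrix (Fin n) (Fin n) ℝ) : Prop :=
  (∀ i j, 0 ≤ M i j) ∧ (∀ i, ∑ j, M i j = 1) ∧ (∀ j, ∑ i, M i j = 1)

/-- The matrix `J = (1/n) 𝟙𝟙ᵀ` with all entries equal to `1/n`. -/
noncomputable def Jmat (n : ℕ) : Matrix (Fin n) (Fin n) ℝ := Matrix.of fun _ _ => (n : ℝ)⁻¹

lemma clm_apply {n : ℕ} (M : Matrix (Fin n) (Fin n) ℝ) (x : EuclideanSpace ℝ (Fin n)) (j : Fin n) :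
    (Matrix.toEuclideanCLM (𝕜 := ℝ) M x) j = M.mulVec (fun k => x k) j := rfl

lemma euclid_norm {n : ℕ} (x : EuclideanSpace ℝ (Fin n)) :
    ‖x‖ = Real.sqrt (∑ i, (x i)^2) := by
  rw [EuclideanSpace.norm_eq]
  congr 1
  exact Finset.sum_congr rfl fun i _ => by rw [Real.norm_eq_abs, sq_abs]

lemma specNorm_mul_le {n : ℕ} (A B : Matrix (Fin n) (Fin n) ℝ) :
    specNorm (A * B) ≤ specNorm A * specNorm B := by
  unfold specNorm
  rw [_root_.map_mul]
  exact norm_mul_le _ _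

lemma specNorm_sub_J_le_one {n : ℕ} (hn : 1 ≤ n) {M : Matrix (Fin n) (Fin n) ℝ}
    (hM : DoublyStochastic M) : specNorm (M - Jmat n) ≤ 1 := by
  obtain ⟨hpos, hrow, hcol⟩ := hM
  have hn0 : (0:ℝ) < (n:ℝ) := by exact_mod_cast hn
  refine ContinuousLinearMap.opNorm_le_bound _ zero_le_one fun x => ?_
  rw [euclid_norm, euclid_norm, one_mul]
  apply Real.sqrt_le_sqrt
  set xb : ℝ := (n:ℝ)⁻¹ * ∑ k, x k with hxb
  set y : Fin n → ℝ := fun j => x j - xb with hy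
  have key : ∀ i, (Matrix.toEuclideanCLM (𝕜 := ℝ) (M - Jmat n) x) i = ∑ j, M i j * y j := by
    intro i
    rw [clm_apply]
    simp only [mulVec, dotProduct, Matrix.sub_apply, Jmat, of_apply, hy]
    rw [Finset.sum_congr rfl (fun j _ => by ring_nf : ∀ j ∈ Finset.univ,
      (M i j - (n:ℝ)⁻¹) * x j = M i j * x j - (n:ℝ)⁻¹ * x j)]
    rw [Finset.sum_sub_distrib]
    rw [Finset.sum_congr rfl (fun j _ => (mul_sub _ _ _ : M i j * (x j - xb) = _))]
    rw [Finset.sum_sub_distrib, ← Finset.sum_mul, hrow i, one_mul]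
    rw [← Finset.mul_sum, hxb]
  calc ∑ i, ((Matrix.toEuclideanCLM (𝕜 := ℝ) (M - Jmat n) x) i)^2
      = ∑ i, (∑ j, M i j * y j)^2 := by exact Finset.sum_congr rfl fun i _ => by rw [key i]
    _ ≤ ∑ i, (∑ j, M i j) * (∑ j, M i j * (y j)^2) := by
        apply Finset.sum_le_sum
        intro i _
        apply Finset.sum_sq_le_sum_mul_sum_of_sq_eq_mul
        · exact fun j _ => hpos i j
        · exact fun j _ => mul_nonneg (hpos i j) (sq_nonneg _)
        · exact fun j _ => by ring
    _ = ∑ j, (y j)^2 := by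
        rw [Finset.sum_congr rfl (fun i _ => by rw [hrow i, one_mul])]
        rw [Finset.sum_comm]
        exact Finset.sum_congr rfl fun j _ => by
          rw [← Finset.sum_mul, hcol j, one_mul]
    _ ≤ ∑ i, (x i)^2 := by
        have h1 : ∑ j, (y j)^2 = ∑ j, (x j)^2 - 2 * xb * (∑ j, x j) + n * xb^2 := by
          simp only [hy, sub_sq]
          rw [Finset.sum_add_distrib, Finset.sum_sub_distrib,
            Finset.sum_const, Finset.card_univ, Fintype.card_fin, nsmul_eq_mul,
            Finset.sum_congr rfl (fun j _ => by ring : ∀ j ∈ Finset.univ,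
              2 * x j * xb = xb * (2 * x j)), ← Finset.mul_sum, Finset.mul_sum,
            Finset.sum_congr rfl (fun j _ => by ring : ∀ j ∈ Finset.univ,
              xb * (2 * x j) = 2 * xb * x j) ]
          rw [← Finset.mul_sum]
        have h2 : (∑ j, x j) = (n:ℝ) * xb := by
          rw [hxb]; field_simp
        rw [h1, h2]
        nlinarith [sq_nonneg xb]

/-- Column ℓ¹ deviation bound via the spectral norm. -/
lemma col_l1_bound {n : ℕ} (hn : 1 ≤ n) (Q : Matrix (Fin n) (Fin n) ℝ) (i : Fin n) :
    ∑ j, |(n:ℝ)⁻¹ - Q j i| ≤ Real.sqrt n * specNorm (Q - Jmat n) := by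
  have hn0 : (0:ℝ) < (n:ℝ) := by exact_mod_cast hn
  set e : EuclideanSpace ℝ (Fin n) := (WithLp.equiv 2 _).symm (Pi.single i 1) with he
  have henorm : ‖e‖ = 1 := by
    rw [euclid_norm]
    have : ∑ k, ((e : EuclideanSpace ℝ (Fin n)) k)^2 = 1 := by
      rw [he]
      simp [Finset.sum_eq_single i, Pi.single_apply]
    rw [this, Real.sqrt_one]
  have hcol : ∀ j, (Matrix.toEuclideanCLM (𝕜 := ℝ) (Q - Jmat n) e) j = Q j i - (n:ℝ)⁻¹ := by
    intro j
    rw [clm_apply]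
    simp [mulVec, dotProduct, he, Pi.single_apply, Finset.sum_ite_eq', Jmat]
  have hl2 : Real.sqrt (∑ j, (Q j i - (n:ℝ)⁻¹)^2) ≤ specNorm (Q - Jmat n) := by
    have := (Matrix.toEuclideanCLM (𝕜 := ℝ) (Q - Jmat n)).le_opNorm e
    rw [henorm, mul_one, euclid_norm] at this
    calc Real.sqrt (∑ j, (Q j i - (n:ℝ)⁻¹)^2)
        = Real.sqrt (∑ j, ((Matrix.toEuclideanCLM (𝕜 := ℝ) (Q - Jmat n) e) j)^2) := by
          congr 1; exact Finset.sum_congr rfl fun j _ => by rw [hcol j]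
      _ ≤ _ := this
  have hCS : (∑ j, |(n:ℝ)⁻¹ - Q j i|)^2 ≤ (n:ℝ) * ∑ j, (Q j i - (n:ℝ)⁻¹)^2 := by
    have := Finset.sum_mul_sq_le_sq_mul_sq Finset.univ (fun _ => (1:ℝ))
      (fun j => |(n:ℝ)⁻¹ - Q j i|)
    simp only [one_mul, one_pow, Finset.sum_const, Finset.card_univ, Fintype.card_fin,
      nsmul_eq_mul, mul_one, sq_abs] at this
    calc (∑ j, |(n:ℝ)⁻¹ - Q j i|)^2 ≤ (n:ℝ) * ∑ j, ((n:ℝ)⁻¹ - Q j i)^2 := this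
      _ = (n:ℝ) * ∑ j, (Q j i - (n:ℝ)⁻¹)^2 := by
          congr 1; exact Finset.sum_congr rfl fun j _ => by ring
  have h1 : ∑ j, |(n:ℝ)⁻¹ - Q j i| ≤ Real.sqrt ((n:ℝ) * ∑ j, (Q j i - (n:ℝ)⁻¹)^2) := by
    rw [← Real.sqrt_sq (Finset.sum_nonneg fun j _ => abs_nonneg _)]
    exact Real.sqrt_le_sqrt hCS
  calc ∑ j, |(n:ℝ)⁻¹ - Q j i| ≤ Real.sqrt ((n:ℝ) * ∑ j, (Q j i - (n:ℝ)⁻¹)^2) := h1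
    _ = Real.sqrt n * Real.sqrt (∑ j, (Q j i - (n:ℝ)⁻¹)^2) := Real.sqrt_mul hn0.le _
    _ ≤ Real.sqrt n * specNorm (Q - Jmat n) := by
        apply mul_le_mul_of_nonneg_left hl2 (Real.sqrt_nonneg _)

lemma DS_one {n : ℕ} : DoublyStochastic (1 : Matrix (Fin n) (Fin n) ℝ) := by
  refine ⟨fun i j => ?_, fun i => ?_, fun j => ?_⟩ <;>
    simp [Matrix.one_apply, Finset.sum_ite_eq']
  · positivity

lemma DS_mul {n : ℕ} {A B : Matrix (Fin n) (Fin n) ℝ}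
    (hA : DoublyStochastic A) (hB : DoublyStochastic B) : DoublyStochastic (A * B) := by
  obtain ⟨hA0, hA1, hA2⟩ := hA
  obtain ⟨hB0, hB1, hB2⟩ := hB
  refine ⟨fun i j => ?_, fun i => ?_, fun j => ?_⟩
  · rw [Matrix.mul_apply]
    exact Finset.sum_nonneg fun k _ => mul_nonneg (hA0 i k) (hB0 k j)
  · simp only [Matrix.mul_apply]
    rw [Finset.sum_comm]
    rw [Finset.sum_congr rfl fun k _ => by rw [← Finset.mul_sum, hB1 k]]
    simpa using hA1 i
  · simp only [Matrix.mul_apply]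
    rw [Finset.sum_comm]
    rw [Finset.sum_congr rfl fun k _ => by
      rw [show (∑ i, A i k * B k j) = (∑ i, A i k) * B k j by rw [Finset.sum_mul], hA2 k, one_mul]]
    exact hB2 j

lemma mul_J {n : ℕ} (_hn : 1 ≤ n) {A : Matrix (Fin n) (Fin n) ℝ} (hA : ∀ i, ∑ j, A i j = 1) :
    A * Jmat n = Jmat n := by
  ext i k
  simp only [Matrix.mul_apply, Jmat, of_apply]
  rw [← Finset.sum_mul, hA i, one_mul]

lemma J_mul {n : ℕ} (_hn : 1 ≤ n) {B : Matrix (Fin n) (Fin n) ℝ} (hB : ∀ j, ∑ i, B i j = 1) :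
    Jmat n * B = Jmat n := by
  ext i k
  simp only [Matrix.mul_apply, Jmat, of_apply]
  rw [← Finset.mul_sum, hB k, mul_one]

lemma sub_J_mul_sub_J {n : ℕ} (hn : 1 ≤ n) {A B : Matrix (Fin n) (Fin n) ℝ}
    (hA : DoublyStochastic A) (hB : DoublyStochastic B) :
    (A - Jmat n) * (B - Jmat n) = A * B - Jmat n := by
  have hJJ : Jmat n * Jmat n = Jmat n := J_mul hn fun j => by
    simp only [Jmat, of_apply, Finset.sum_const, Finset.card_univ, Fintype.card_fin,
      nsmul_eq_mul]
    field_simp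
  rw [Matrix.sub_mul, Matrix.mul_sub, Matrix.mul_sub, mul_J hn hA.2.1, J_mul hn hB.2.2, hJJ]
  abel

/-- product of `P s, ..., P (t-1)`. -/
noncomputable def Qm {n : ℕ} (P : ℕ → Matrix (Fin n) (Fin n) ℝ) (s t : ℕ) :
    Matrix (Fin n) (Fin n) ℝ := ((List.range' s (t - s)).map P).prod

lemma Qm_self {n : ℕ} (P : ℕ → Matrix (Fin n) (Fin n) ℝ) (s : ℕ) : Qm P s s = 1 := by
  simp [Qm]

lemma Qm_succ {n : ℕ} (P : ℕ → Matrix (Fin n) (Fin n) ℝ) {s t : ℕ} (h : s ≤ t) :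
    Qm P s (t + 1) = Qm P s t * P t := by
  unfold Qm
  rw [show t + 1 - s = (t - s) + 1 by omega, List.range'_concat,
    show s + 1 * (t - s) = t by omega, List.map_append, List.prod_append]
  simp

lemma DS_Qm {n : ℕ} {P : ℕ → Matrix (Fin n) (Fin n) ℝ} (hP : ∀ t, DoublyStochastic (P t))
    (s t : ℕ) : DoublyStochastic (Qm P s t) := by
  rcases le_or_gt s t with h | h
  · obtain ⟨m, rfl⟩ := Nat.exists_eq_add_of_le h
    induction m with
    | zero => simpa [Qm_self] using DS_one
    | succ m ih =>
      rw [show s + (m+1) = (s + m) + 1 by omega, Qm_succ P (by omega)]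
      exact DS_mul (ih (by omega)) (hP _)
  · rw [Qm, show t - s = 0 by omega]
    simpa using DS_one

lemma specNorm_Qm_le {n : ℕ} (hn : 1 ≤ n) {P : ℕ → Matrix (Fin n) (Fin n) ℝ}
    (hP : ∀ t, DoublyStochastic (P t)) {s t : ℕ} (h : s ≤ t) :
    specNorm (Qm P s t - Jmat n) ≤ ∏ k ∈ Finset.Ico s t, specNorm (P k - Jmat n) := by
  obtain ⟨m, rfl⟩ := Nat.exists_eq_add_of_le h
  induction m with
  | zero => simpa [Qm_self] using specNorm_sub_J_le_one hn DS_one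
  | succ m ih =>
    rw [show s + (m+1) = (s + m) + 1 by omega, Qm_succ P (by omega),
      ← sub_J_mul_sub_J hn (DS_Qm hP s (s+m)) (hP (s+m)),
      Finset.prod_Ico_succ_top (by omega)]
    calc specNorm ((Qm P s (s+m) - Jmat n) * (P (s+m) - Jmat n))
        ≤ specNorm (Qm P s (s+m) - Jmat n) * specNorm (P (s+m) - Jmat n) :=
          specNorm_mul_le _ _
      _ ≤ (∏ k ∈ Finset.Ico s (s+m), specNorm (P k - Jmat n)) * specNorm (P (s+m) - Jmat n) := by
          apply mul_le_mul_of_nonneg_right (ih (by omega)) (norm_nonneg _)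

/-- The key bound (50) in the proof of Proposition 2: over an evolving network with
nonincreasing second-largest singular values, if the mixing-time product condition
`∏_{k<δ} ‖P_k - J‖ ≤ 1/(T√n)` holds, then each agent's dual variable stays within
`3L + 2Lδ` of the network average. -/
theorem stmt7 {E : Type*} [NormedAddCommGroup E] [NormedSpace ℝ E]
    {n : ℕ} (hn : 1 ≤ n) (L : ℝ) (hL : 0 ≤ L)
    (P : ℕ → Matrix (Fin n) (Fin n) ℝ) (hP : ∀ t, DoublyStochastic (P t))
    (g : Fin n → ℕ → E) (hg : ∀ i t, ‖g i t‖ ≤ L)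
    (z : Fin n → ℕ → E)
    (hz0 : ∀ i, z i 0 = 0)
    (hzrec : ∀ i t, z i (t + 1) = (∑ j, P t j i • z j t) + g i t)
    (zbar : ℕ → E) (hzbar : ∀ t, zbar t = (n : ℝ)⁻¹ • ∑ j, z j t)
    (hmono : Antitone fun t => specNorm (P t - Jmat n))
    (T δ : ℕ) (hT : 1 ≤ T) (hδ : 1 ≤ δ)
    (hprod : ∏ k ∈ Finset.range δ, specNorm (P k - Jmat n) ≤
      1 / ((T : ℝ) * Real.sqrt n)) :
    ∀ t, 1 ≤ t → t ≤ T → ∀ i,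
      ‖zbar t - z i t‖ ≤ 3 * L + 2 * L * (δ : ℝ) := by
  have hσ0 : ∀ k, 0 ≤ specNorm (P k - Jmat n) := fun k => norm_nonneg _
  have hσ1 : ∀ k, specNorm (P k - Jmat n) ≤ 1 := fun k => specNorm_sub_J_le_one hn (hP k)
  have hn0 : (0:ℝ) < (n:ℝ) := by exact_mod_cast hn
  have hT0 : (0:ℝ) < (T:ℝ) := by exact_mod_cast hT
  have hsq : (0:ℝ) < Real.sqrt n := Real.sqrt_pos.mpr hn0
  -- the unrolled formula
  have unroll : ∀ t i, z i t = ∑ s ∈ Finset.range t, ∑ j, (Qm P (s+1) t) j i • g j s := by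
    intro t
    induction t with
    | zero => intro i; simp [hz0]
    | succ t ih =>
      intro i
      rw [hzrec i t, Finset.sum_range_succ]
      congr 1
      · calc ∑ j, P t j i • z j t
            = ∑ j, ∑ s ∈ Finset.range t, ∑ k, (P t j i * Qm P (s+1) t k j) • g k s := by
              refine Finset.sum_congr rfl fun j _ => ?_
              rw [ih j, Finset.smul_sum]
              refine Finset.sum_congr rfl fun s _ => ?_
              rw [Finset.smul_sum]
              exact Finset.sum_congr rfl fun k _ => smul_smul _ _ _
          _ = ∑ s ∈ Finset.range t, ∑ k, (∑ j, P t j i * Qm P (s+1) t k j) • g k s := by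
              rw [Finset.sum_comm]
              refine Finset.sum_congr rfl fun s _ => ?_
              rw [Finset.sum_comm]
              exact Finset.sum_congr rfl fun k _ => (Finset.sum_smul).symm
          _ = ∑ s ∈ Finset.range t, ∑ k, (Qm P (s+1) (t+1)) k i • g k s := by
              refine Finset.sum_congr rfl fun s hs => Finset.sum_congr rfl fun k _ => ?_
              have hs' : s + 1 ≤ t := Finset.mem_range.mp hs
              rw [Qm_succ P hs', Matrix.mul_apply]
              congr 1
              exact Finset.sum_congr rfl fun j _ => mul_comm _ _
      · rw [Qm_self]
        simp [Matrix.one_apply, ite_smul, Finset.sum_ite_eq']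
  -- formula for the average
  have zbar_eq : ∀ t, zbar t = ∑ s ∈ Finset.range t, ∑ k, (n:ℝ)⁻¹ • g k s := by
    intro t
    rw [hzbar t]
    have : ∑ j, z j t = ∑ s ∈ Finset.range t, ∑ k, g k s := by
      rw [Finset.sum_congr rfl fun j _ => unroll t j, Finset.sum_comm]
      refine Finset.sum_congr rfl fun s _ => ?_
      rw [Finset.sum_comm]
      refine Finset.sum_congr rfl fun k _ => ?_
      rw [← Finset.sum_smul, (DS_Qm hP (s+1) t).2.1 k, one_smul]
    rw [this, Finset.smul_sum]
    exact Finset.sum_congr rfl fun s _ => Finset.smul_sum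
  intro t ht htT i
  -- the difference
  have diff_eq : zbar t - z i t =
      ∑ s ∈ Finset.range t, ∑ j, (((n:ℝ)⁻¹ - (Qm P (s+1) t) j i) • g j s) := by
    rw [zbar_eq t, unroll t i, ← Finset.sum_sub_distrib]
    refine Finset.sum_congr rfl fun s _ => ?_
    rw [← Finset.sum_sub_distrib]
    exact Finset.sum_congr rfl fun j _ => (sub_smul _ _ _).symm
  set B : ℕ → ℝ := fun s => ∑ j, |(n:ℝ)⁻¹ - (Qm P (s+1) t) j i| with hB
  have norm_le : ‖zbar t - z i t‖ ≤ ∑ s ∈ Finset.range t, B s * L := by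
    rw [diff_eq]
    refine (norm_sum_le _ _).trans (Finset.sum_le_sum fun s _ => ?_)
    refine (norm_sum_le _ _).trans ?_
    rw [hB, Finset.sum_mul]
    refine Finset.sum_le_sum fun j _ => ?_
    rw [norm_smul, Real.norm_eq_abs]
    exact mul_le_mul_of_nonneg_left (hg j s) (abs_nonneg _)
  -- bound on good terms
  have good : ∀ s, s + 1 + δ ≤ t → B s ≤ 1 / (T:ℝ) := by
    intro s hs
    have h1 : B s ≤ Real.sqrt n * specNorm (Qm P (s+1) t - Jmat n) := col_l1_bound hn _ i
    have h2 : specNorm (Qm P (s+1) t - Jmat n) ≤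
        ∏ k ∈ Finset.Ico (s+1) t, specNorm (P k - Jmat n) := specNorm_Qm_le hn hP (by omega)
    have h3 : ∏ k ∈ Finset.Ico (s+1) t, specNorm (P k - Jmat n) ≤
        ∏ k ∈ Finset.range δ, specNorm (P k - Jmat n) := by
      rw [← Finset.prod_Ico_consecutive _ (show s+1 ≤ s+1+δ by omega) (show s+1+δ ≤ t by omega)]
      have ha : ∏ k ∈ Finset.Ico (s+1) (s+1+δ), specNorm (P k - Jmat n) ≤
          ∏ k ∈ Finset.range δ, specNorm (P k - Jmat n) := by
        rw [Finset.prod_Ico_eq_prod_range, show s+1+δ - (s+1) = δ by omega]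
        exact Finset.prod_le_prod (fun k _ => hσ0 _)
          (fun k _ => hmono (show k ≤ s+1+k by omega))
      have hb : ∏ k ∈ Finset.Ico (s+1+δ) t, specNorm (P k - Jmat n) ≤ 1 :=
        Finset.prod_le_one (fun k _ => hσ0 k) (fun k _ => hσ1 k)
      calc (∏ k ∈ Finset.Ico (s+1) (s+1+δ), specNorm (P k - Jmat n)) *
            ∏ k ∈ Finset.Ico (s+1+δ) t, specNorm (P k - Jmat n)
          ≤ (∏ k ∈ Finset.Ico (s+1) (s+1+δ), specNorm (P k - Jmat n)) * 1 :=
            mul_le_mul_of_nonneg_left hb (Finset.prod_nonneg fun k _ => hσ0 k)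
        _ = ∏ k ∈ Finset.Ico (s+1) (s+1+δ), specNorm (P k - Jmat n) := mul_one _
        _ ≤ _ := ha
    calc B s ≤ Real.sqrt n * specNorm (Qm P (s+1) t - Jmat n) := h1
      _ ≤ Real.sqrt n * (1 / ((T:ℝ) * Real.sqrt n)) := by
          apply mul_le_mul_of_nonneg_left _ hsq.le
          exact le_trans h2 (le_trans h3 hprod)
      _ = 1 / (T:ℝ) := by
          field_simp
  -- bound on all terms
  have bad : ∀ s, B s ≤ 2 := by
    intro s
    obtain ⟨hq0, _, hq2⟩ := DS_Qm hP (s+1) t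
    calc B s ≤ ∑ j, ((n:ℝ)⁻¹ + (Qm P (s+1) t) j i) := by
          refine Finset.sum_le_sum fun j _ => ?_
          refine (abs_sub _ _).trans ?_
          rw [abs_of_nonneg (by positivity), abs_of_nonneg (hq0 j i)]
      _ = 1 + 1 := by
          rw [Finset.sum_add_distrib, hq2 i, Finset.sum_const, Finset.card_univ,
            Fintype.card_fin, nsmul_eq_mul]
          congr 1
          field_simp
      _ = 2 := by norm_num
  -- split the sum
  have hsplit : ∑ s ∈ Finset.range t, B s * L =
      (∑ s ∈ Finset.range (t - δ), B s * L) + ∑ s ∈ Finset.Ico (t - δ) t, B s * L := by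
    rw [Finset.range_eq_Ico, Finset.range_eq_Ico]
    exact (Finset.sum_Ico_consecutive _ (Nat.zero_le _) (Nat.sub_le t δ)).symm
  have hgoodsum : ∑ s ∈ Finset.range (t - δ), B s * L ≤ L := by
    calc ∑ s ∈ Finset.range (t - δ), B s * L ≤ ∑ s ∈ Finset.range (t - δ), (1/(T:ℝ)) * L := by
          refine Finset.sum_le_sum fun s hs => ?_
          have := Finset.mem_range.mp hs
          exact mul_le_mul_of_nonneg_right (good s (by omega)) hL
      _ = ((t - δ : ℕ) : ℝ) * ((1/(T:ℝ)) * L) := by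
          rw [Finset.sum_const, Finset.card_range, nsmul_eq_mul]
      _ ≤ (T:ℝ) * ((1/(T:ℝ)) * L) := by
          apply mul_le_mul_of_nonneg_right _ (by positivity)
          exact_mod_cast (Nat.sub_le t δ).trans htT
      _ = L := by field_simp
  have hbadsum : ∑ s ∈ Finset.Ico (t - δ) t, B s * L ≤ 2 * L * (δ : ℝ) := by
    calc ∑ s ∈ Finset.Ico (t - δ) t, B s * L ≤ ∑ s ∈ Finset.Ico (t - δ) t, 2 * L := by
          exact Finset.sum_le_sum fun s _ => mul_le_mul_of_nonneg_right (bad s) hL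
      _ = ((t - (t - δ) : ℕ) : ℝ) * (2 * L) := by
          rw [Finset.sum_const, Nat.card_Ico, nsmul_eq_mul]
      _ ≤ (δ : ℝ) * (2 * L) := by
          apply mul_le_mul_of_nonneg_right _ (by positivity)
          exact_mod_cast (by omega : t - (t - δ) ≤ δ)
      _ = 2 * L * (δ : ℝ) := by ring
  calc ‖zbar t - z i t‖ ≤ ∑ s ∈ Finset.range t, B s * L := norm_le
    _ = _ := hsplit
    _ ≤ L + 2 * L * (δ : ℝ) := add_le_add hgoodsum hbadsum
    _ ≤ 3 * L + 2 * L * (δ : ℝ) := by nlinarith
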